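/- Let n ≥ 1 and let Z ∈ so(n). If C is a symmetric real n×n matrix such that I + C is positive definite and (I + Z + C)ᵀ(I + Z + C) = I, then I − ZᵀZ is positive definite and C = √(I − ZᵀZ) − I. (In particular, the symmetric normal adjustment in the tangent-space parametrization R = R₀(I + Z + C) with I + C positive definite is unique.) -/

import Mathlib

open Matrix

/-- The square root of a positive semidefinite matrix, as `Matrix.PosSemidef.sqrt` was defined in
the older Mathlib (it has since been removed). -/
noncomputable def Matrix.PosSemidef.sqrt {n 𝕜 : Type*} [Fintype n] [RCLike 𝕜] [PartialOrder 𝕜]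
    [DecidableEq n]
    {A : Matrix n n 𝕜} (hA : A.PosSemidef) : Matrix n n 𝕜 :=
  hA.1.eigenvectorUnitary.1 * diagonal ((↑) ∘ (√·) ∘ hA.1.eigenvalues) *
    (star hA.1.eigenvectorUnitary : Matrix n n 𝕜)

/-- Uniqueness of the symmetric normal adjustment: if `Z` is
skew-symmetric, `C` is symmetric, `I + C` is positive definite and
`(I + Z + C)ᵀ (I + Z + C) = I`, then `I - ZᵀZ` is positive definite and
`C = √(I - ZᵀZ) - I`. -/
theorem stmt1 {n : ℕ} (hn : 1 ≤ n) (Z C : Matrix (Fin n) (Fin n) ℝ)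
    (hZ : Zᵀ = -Z) (hC : Cᵀ = C) (hICpd : (1 + C).PosDef)
    (horth : (1 + Z + C)ᵀ * (1 + Z + C) = 1) :
    ∃ hpd : (1 - Zᵀ * Z).PosDef, C = hpd.posSemidef.sqrt - 1 := by
  set S : Matrix (Fin n) (Fin n) ℝ := 1 + C with hS
  have hT : (1 + Z + C)ᵀ = 1 - Z + C := by
    simp [transpose_add, hZ, hC, sub_eq_add_neg, add_right_comm]
  have h1 : (1 - Z + C) * (1 + Z + C) = 1 := by rw [← hT]; exact horth
  have h2 : (1 + Z + C) * (1 - Z + C) = 1 := by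
    rw [← hT]; exact mul_eq_one_comm.mp horth
  have key2 : S * S + S * S = (1 + Z * Z) + (1 + Z * Z) := by
    calc S * S + S * S
        = ((1 - Z + C) * (1 + Z + C) + (1 + Z + C) * (1 - Z + C)) + (Z * Z + Z * Z) := by
          rw [hS]; noncomm_ring
      _ = (1 + Z * Z) + (1 + Z * Z) := by rw [h1, h2]; abel
  have hsq : S * S = 1 + Z * Z := by
    have h2s : (2 : ℝ) • (S * S) = (2 : ℝ) • (1 + Z * Z) := by
      rw [two_smul, two_smul]; exact_mod_cast key2
    exact smul_right_injective _ (two_ne_zero) h2s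
  have hrw : 1 - Zᵀ * Z = S * S := by rw [hZ, hsq]; noncomm_ring
  have hSherm : S.IsHermitian := by
    rw [IsHermitian, conjTranspose_eq_transpose_of_trivial]
    simp [hS, transpose_add, hC]
  have hSS : (S * S).PosDef := by
    refine PosDef.of_dotProduct_mulVec_pos ?_ (fun x hx => ?_)
    · rw [IsHermitian, conjTranspose_mul, hSherm.eq]
    · have hSx : S *ᵥ x ≠ 0 := by
        intro h
        exact hx (Matrix.mulVec_injective_iff_isUnit.mpr hICpd.isUnit (by simpa [hS] using h.trans (Matrix.mulVec_zero S).symm))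
      have : star x ⬝ᵥ (S * S) *ᵥ x = star (S *ᵥ x) ⬝ᵥ (S *ᵥ x) := by
        rw [← mulVec_mulVec, dotProduct_mulVec, star_mulVec, hSherm.eq]
      rw [this]
      exact dotProduct_star_self_pos_iff.mpr hSx
  have hpd : (1 - Zᵀ * Z).PosDef := hrw ▸ hSS
  refine ⟨hpd, ?_⟩
  have hSsqrt : S = hpd.posSemidef.sqrt := by
    open scoped MatrixOrder in
    have e : hpd.posSemidef.sqrt = CFC.sqrt (1 - Zᵀ * Z) := by
      rw [CFC.sqrt_eq_cfc, cfc_nnreal_eq_real _ _, hpd.posSemidef.1.cfc_eq]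
      simp [Matrix.PosSemidef.sqrt, IsHermitian.cfc, Function.comp_def, fun i => max_eq_left (hpd.posSemidef.eigenvalues_nonneg i)]
    open scoped MatrixOrder in
    rw [e]; exact (CFC.sqrt_unique hrw.symm (hb := hICpd.posSemidef.nonneg)).symm
  rw [← hSsqrt, hS]; abel
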